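/- If max{k0, k1} > 0, then μ_c > 0. -/

import Mathlib

open MeasureTheory Set

noncomputable section

/-- A function is admissible if it is twice continuously differentiable on `[0,1]`
and vanishes at the endpoints (the C² representatives of `H₀¹(0,1) ∩ H²(0,1)`). -/
def Admissible (ψ : ℝ → ℝ) : Prop :=
  ContDiffOn ℝ 2 ψ (Set.Icc (0:ℝ) 1) ∧ ψ 0 = 0 ∧ ψ 1 = 0

/-- The boundary energy `Z(ψ) = k1·ψ′(1)² + k0·ψ′(0)²`. -/
def Z (k0 k1 : ℝ) (ψ : ℝ → ℝ) : ℝ :=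
  k1 * (deriv ψ 1) ^ 2 + k0 * (deriv ψ 0) ^ 2

/-- The Dirichlet-type energy `D(ψ) = ∫₀¹ ψ″(y)² dy`. -/
def D (ψ : ℝ → ℝ) : ℝ :=
  ∫ y in (0:ℝ)..1, (deriv (deriv ψ) y) ^ 2

/-- The set of Rayleigh quotients `Z(ψ)/D(ψ)` over admissible `ψ` with `D(ψ) ≠ 0`. -/
def mucSet (k0 k1 : ℝ) : Set ℝ :=
  { r : ℝ | ∃ ψ : ℝ → ℝ, Admissible ψ ∧ D ψ ≠ 0 ∧ r = Z k0 k1 ψ / D ψ }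

/-- The critical viscosity `μ_c`. -/
def muc (k0 k1 : ℝ) : ℝ := sSup (mucSet k0 k1)

end

/-- Elementary Cauchy–Schwarz inequality for intervals of length at most one. -/
lemma sq_int_le {a b : ℝ} (hab : a ≤ b) (hba : b - a ≤ 1) {g : ℝ → ℝ}
    (hg : ContinuousOn g (Icc a b)) :
    (∫ y in a..b, g y) ^ 2 ≤ ∫ y in a..b, (g y) ^ 2 := by
  have huicc : uIcc a b = Icc a b := uIcc_of_le hab
  have hgi : IntervalIntegrable g volume a b := (huicc ▸ hg).intervalIntegrable
  have hg2 : IntervalIntegrable (fun y => (g y) ^ 2) volume a b :=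
    (huicc ▸ (hg.pow 2)).intervalIntegrable
  set I := ∫ y in a..b, g y with hI
  have h0 : 0 ≤ ∫ y in a..b, (g y - I) ^ 2 :=
    intervalIntegral.integral_nonneg hab fun _ _ => sq_nonneg _
  have hexp : ∫ y in a..b, (g y - I) ^ 2
      = (∫ y in a..b, (g y) ^ 2) - 2 * I * I + (b - a) * I ^ 2 := by
    have h1 : ∀ y, (g y - I) ^ 2 = (g y) ^ 2 - (2 * I) * g y + I ^ 2 := fun y => by ring
    simp_rw [h1]
    rw [intervalIntegral.integral_add (hg2.sub (hgi.const_mul _)) intervalIntegrable_const,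
      intervalIntegral.integral_sub hg2 (hgi.const_mul _),
      intervalIntegral.integral_const_mul, intervalIntegral.integral_const]
    simp [hI]
  nlinarith [sq_nonneg I, mul_nonneg (by linarith : (0:ℝ) ≤ 1 - (b - a)) (sq_nonneg I)]

/-- The trace/Poincaré estimate: for admissible `ψ`, the squared boundary derivatives are
bounded by the Dirichlet energy, and the Dirichlet energy is nonnegative. -/
lemma trace_bound {ψ : ℝ → ℝ} (h : Admissible ψ) :
    (deriv ψ 0) ^ 2 ≤ D ψ ∧ (deriv ψ 1) ^ 2 ≤ D ψ ∧ 0 ≤ D ψ := by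
  obtain ⟨hC, h0, h1⟩ := h
  have u : UniqueDiffOn ℝ (Icc (0:ℝ) 1) := uniqueDiffOn_Icc one_pos
  set f := derivWithin ψ (Icc (0:ℝ) 1) with hf
  set g := derivWithin f (Icc (0:ℝ) 1) with hg
  have hfC : ContDiffOn ℝ 1 f (Icc (0:ℝ) 1) := hC.derivWithin u (by norm_num)
  have hgc : ContinuousOn g (Icc (0:ℝ) 1) := hfC.continuousOn_derivWithin u le_rfl
  have hmem : ∀ y ∈ Ioo (0:ℝ) 1, Icc (0:ℝ) 1 ∈ nhds y := fun y hy => Icc_mem_nhds hy.1 hy.2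
  have hfy : ∀ y ∈ Ioo (0:ℝ) 1, deriv ψ y = f y := fun y hy =>
    (derivWithin_of_mem_nhds (hmem y hy)).symm
  have hfd : ∀ y ∈ Ioo (0:ℝ) 1, HasDerivAt f (g y) y := by
    intro y hy
    exact (((hfC.differentiableOn one_ne_zero) y (Ioo_subset_Icc_self hy)).hasDerivWithinAt).hasDerivAt
      (hmem y hy)
  have hgy : ∀ y ∈ Ioo (0:ℝ) 1, deriv (deriv ψ) y = g y := by
    intro y hy
    have hev : deriv ψ =ᶠ[nhds y] f := by
      filter_upwards [Ioo_mem_nhds hy.1 hy.2] with x hx using hfy x hx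
    rw [hev.deriv_eq]
    exact (hfd y hy).deriv
  have hD : D ψ = ∫ y in (0:ℝ)..1, (g y) ^ 2 := by
    apply intervalIntegral.integral_congr_ae
    have hae : ∀ᵐ x : ℝ ∂volume, x ≠ 1 := by
      refine ae_iff.2 ?_
      simpa using Real.volume_singleton
    filter_upwards [hae] with x hx hxI
    rw [uIoc_of_le one_pos.le] at hxI
    have : x ∈ Ioo (0:ℝ) 1 := ⟨hxI.1, lt_of_le_of_ne hxI.2 hx⟩
    rw [hgy x this]
  obtain ⟨c, hc, hc0⟩ := exists_deriv_eq_zero one_pos hC.continuousOn (by rw [h0, h1])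
  have hfc0 : f c = 0 := by rw [← hfy c hc]; exact hc0
  have hg2int : ∀ a b : ℝ, a ∈ Icc (0:ℝ) 1 → b ∈ Icc (0:ℝ) 1 →
      IntervalIntegrable (fun y => (g y) ^ 2) volume a b := by
    intro a b ha hb
    exact ((hgc.pow 2).mono ((uIcc_subset_Icc ha hb))).intervalIntegrable
  have hDsplit : D ψ = (∫ y in (0:ℝ)..c, (g y)^2) + ∫ y in c..(1:ℝ), (g y)^2 := by
    rw [hD, ← intervalIntegral.integral_add_adjacent_intervals
      (hg2int 0 c ⟨le_rfl, one_pos.le⟩ (Ioo_subset_Icc_self hc))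
      (hg2int c 1 (Ioo_subset_Icc_self hc) ⟨one_pos.le, le_rfl⟩)]
  have hleft0 : 0 ≤ ∫ y in (0:ℝ)..c, (g y)^2 :=
    intervalIntegral.integral_nonneg hc.1.le fun _ _ => sq_nonneg _
  have hright0 : 0 ≤ ∫ y in c..(1:ℝ), (g y)^2 :=
    intervalIntegral.integral_nonneg hc.2.le fun _ _ => sq_nonneg _
  have hDnn : 0 ≤ D ψ := by rw [hDsplit]; positivity
  have hgint : ∀ a b : ℝ, a ∈ Icc (0:ℝ) 1 → b ∈ Icc (0:ℝ) 1 →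
      IntervalIntegrable g volume a b := fun a b ha hb =>
    (hgc.mono (uIcc_subset_Icc ha hb)).intervalIntegrable
  have hftc1 : f 1 - f c = ∫ y in c..(1:ℝ), g y := by
    rw [intervalIntegral.integral_eq_sub_of_hasDeriv_right_of_le hc.2.le
      (hfC.continuousOn.mono (Icc_subset_Icc hc.1.le le_rfl))
      (fun x hx => (hfd x ⟨lt_trans hc.1 hx.1, hx.2⟩).hasDerivWithinAt)
      (hgint c 1 (Ioo_subset_Icc_self hc) ⟨one_pos.le, le_rfl⟩)]
  have hftc0 : f c - f 0 = ∫ y in (0:ℝ)..c, g y := by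
    rw [intervalIntegral.integral_eq_sub_of_hasDeriv_right_of_le hc.1.le
      (hfC.continuousOn.mono (Icc_subset_Icc le_rfl hc.2.le))
      (fun x hx => (hfd x ⟨hx.1, lt_trans hx.2 hc.2⟩).hasDerivWithinAt)
      (hgint 0 c ⟨le_rfl, one_pos.le⟩ (Ioo_subset_Icc_self hc))]
  have hCS1 : (f 1) ^ 2 ≤ ∫ y in c..(1:ℝ), (g y)^2 := by
    have := sq_int_le hc.2.le (by linarith [hc.1] : (1:ℝ) - c ≤ 1)
      (hgc.mono (Icc_subset_Icc hc.1.le le_rfl))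
    rw [← hftc1, hfc0, sub_zero] at this
    exact this
  have hCS0 : (f 0) ^ 2 ≤ ∫ y in (0:ℝ)..c, (g y)^2 := by
    have := sq_int_le hc.1.le (by linarith [hc.2] : c - 0 ≤ 1)
      (hgc.mono (Icc_subset_Icc le_rfl hc.2.le))
    rw [← hftc0, hfc0, zero_sub] at this
    rw [← neg_pow_two (f 0)]
    exact this
  have hb1 : (f 1) ^ 2 ≤ D ψ := by rw [hDsplit]; linarith
  have hb0 : (f 0) ^ 2 ≤ D ψ := by rw [hDsplit]; linarith
  refine ⟨?_, ?_, hDnn⟩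
  · by_cases hd : DifferentiableAt ℝ ψ 0
    · rw [← hd.derivWithin (u 0 ⟨le_rfl, one_pos.le⟩)]; exact hb0
    · rw [deriv_zero_of_not_differentiableAt hd]; simpa using hDnn
  · by_cases hd : DifferentiableAt ℝ ψ 1
    · rw [← hd.derivWithin (u 1 ⟨one_pos.le, le_rfl⟩)]; exact hb1
    · rw [deriv_zero_of_not_differentiableAt hd]; simpa using hDnn

lemma mucSet_bddAbove (k0 k1 : ℝ) : BddAbove (mucSet k0 k1) := by
  refine ⟨|k0| + |k1|, fun r hr => ?_⟩
  obtain ⟨ψ, hA, hD0, rfl⟩ := hr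
  obtain ⟨hb0, hb1, hDnn⟩ := trace_bound hA
  have hDpos : 0 < D ψ := lt_of_le_of_ne hDnn (Ne.symm hD0)
  rw [div_le_iff₀ hDpos, Z]
  nlinarith [mul_nonneg (abs_nonneg k1) (sub_nonneg.2 hb1),
    mul_nonneg (abs_nonneg k0) (sub_nonneg.2 hb0),
    mul_nonneg (sub_nonneg.2 (le_abs_self k1)) (sq_nonneg (deriv ψ 1)),
    mul_nonneg (sub_nonneg.2 (le_abs_self k0)) (sq_nonneg (deriv ψ 0))]

lemma quarter_k1_mem (k0 k1 : ℝ) : k1 / 4 ∈ mucSet k0 k1 := by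
  set ψ : ℝ → ℝ := fun y => y ^ 2 - y ^ 3 with hψ
  have hd1 : deriv ψ = fun y => 2 * y - 3 * y ^ 2 := by
    funext y
    rw [hψ, deriv_fun_sub (by fun_prop) (by fun_prop)]
    simp
  have hd2 : deriv (deriv ψ) = fun y => 2 - 6 * y := by
    rw [hd1]; funext y
    rw [deriv_fun_sub (by fun_prop) (by fun_prop), deriv_const_mul _ (by fun_prop),
      deriv_const_mul _ (by fun_prop)]
    simp; ring
  have hD : D ψ = 4 := by
    rw [D, hd2]
    have h1 : ∀ y : ℝ, (2 - 6 * y) ^ 2 = 4 - 24 * y + 36 * y ^ 2 := fun y => by ring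
    simp_rw [h1]
    rw [intervalIntegral.integral_add (by apply Continuous.intervalIntegrable; fun_prop)
        (by apply Continuous.intervalIntegrable; fun_prop),
      intervalIntegral.integral_sub (by apply Continuous.intervalIntegrable; fun_prop)
        (by apply Continuous.intervalIntegrable; fun_prop),
      intervalIntegral.integral_const_mul, intervalIntegral.integral_const_mul,
      integral_id, integral_pow]
    norm_num
  have hZ : Z k0 k1 ψ = k1 := by
    rw [Z, hd1]; norm_num
  refine ⟨ψ, ⟨((contDiff_id.pow 2).sub (contDiff_id.pow 3)).contDiffOn, by simp [hψ], by
    simp [hψ]⟩, by rw [hD]; norm_num, by rw [hZ, hD]⟩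

lemma quarter_k0_mem (k0 k1 : ℝ) : k0 / 4 ∈ mucSet k0 k1 := by
  set ψ : ℝ → ℝ := fun y => y - 2 * y ^ 2 + y ^ 3 with hψ
  have hd1 : deriv ψ = fun y => 1 - 4 * y + 3 * y ^ 2 := by
    funext y
    rw [hψ, deriv_fun_add (by fun_prop) (by fun_prop), deriv_fun_sub (by fun_prop) (by fun_prop),
      deriv_const_mul _ (by fun_prop)]
    simp; ring
  have hd2 : deriv (deriv ψ) = fun y => -4 + 6 * y := by
    rw [hd1]; funext y
    rw [deriv_fun_add (by fun_prop) (by fun_prop), deriv_fun_sub (by fun_prop) (by fun_prop),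
      deriv_const_mul _ (by fun_prop), deriv_const_mul _ (by fun_prop)]
    simp; ring
  have hD : D ψ = 4 := by
    rw [D, hd2]
    have h1 : ∀ y : ℝ, (-4 + 6 * y) ^ 2 = 16 - 48 * y + 36 * y ^ 2 := fun y => by ring
    simp_rw [h1]
    rw [intervalIntegral.integral_add (by apply Continuous.intervalIntegrable; fun_prop)
        (by apply Continuous.intervalIntegrable; fun_prop),
      intervalIntegral.integral_sub (by apply Continuous.intervalIntegrable; fun_prop)
        (by apply Continuous.intervalIntegrable; fun_prop),
      intervalIntegral.integral_const_mul, intervalIntegral.integral_const_mul,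
      integral_id, integral_pow]
    norm_num
  have hZ : Z k0 k1 ψ = k0 := by
    rw [Z, hd1]; norm_num
  refine ⟨ψ, ⟨(((contDiff_id.sub ((contDiff_const).mul (contDiff_id.pow 2))).add
    (contDiff_id.pow 3))).contDiffOn, by simp [hψ], by norm_num [hψ]⟩,
    by rw [hD]; norm_num, by rw [hZ, hD]⟩

/-- if `max{k0, k1} > 0` then `μ_c > 0`. -/
theorem muc_pos_of_max_pos (k0 k1 : ℝ) (hk : 0 < max k0 k1) :
    0 < muc k0 k1 := by
  rcases lt_max_iff.1 hk with hk0 | hk1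
  · exact lt_csSup_of_lt (mucSet_bddAbove k0 k1) (quarter_k0_mem k0 k1) (by linarith)
  · exact lt_csSup_of_lt (mucSet_bddAbove k0 k1) (quarter_k1_mem k0 k1) (by linarith)
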